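/- The block kernel Q_J satisfies detailed balance with respect to every Ising Gibbs measure μ_{J,h}: for all σ, σ', τ, τ' ∈ Ω and all h ∈ ℝⁿ, μ_{J,h}(σ)μ_{J,h}(σ')Q_J(σ,σ';τ,τ') = μ_{J,h}(τ)μ_{J,h}(τ')Q_J(τ,τ';σ,σ'). -/
import Mathlib


/-- The ±1 spin value of a Boolean. -/
def spin (b : Bool) : ℝ := if b then 1 else -1

/-- Unnormalized Ising weight with interaction J and external fields h. -/
noncomputable def isingWeight {n : ℕ} (J : Fin n → Fin n → ℝ) (h : Fin n → ℝ)
    (σ : Fin n → Bool) : ℝ :=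
  Real.exp ((1 / 2) * ∑ x, ∑ y, J x y * spin (σ x) * spin (σ y)
      + ∑ x, h x * spin (σ x))

/-- Ising Gibbs measure with interaction J and external fields h. -/
noncomputable def isingGibbs {n : ℕ} (J : Fin n → Fin n → ℝ) (h : Fin n → ℝ)
    (σ : Fin n → Bool) : ℝ :=
  isingWeight J h σ / ∑ τ, isingWeight J h τ

/-- The configuration equal to σ on Λ and to σ' off Λ. -/
def mix {n : ℕ} (Λ : Finset (Fin n)) (σ σ' : Fin n → Bool) : Fin n → Bool :=
  fun x => if x ∈ Λ then σ x else σ' x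

/-- The nonlinear block dynamics kernel Q_J, defined from the zero-field Gibbs
measure: (τ,τ') = (σ'_Λσ_{Λᶜ}, σ_Λσ'_{Λᶜ}) with Λ chosen with probability
proportional to μ_J(σ'_Λσ_{Λᶜ})μ_J(σ_Λσ'_{Λᶜ}). -/
noncomputable def blockKernel {n : ℕ} (J : Fin n → Fin n → ℝ)
    (σ σ' τ τ' : Fin n → Bool) : ℝ :=
  (∑ Λ : Finset (Fin n),
      isingGibbs J (fun _ => 0) (mix Λ σ' σ) * isingGibbs J (fun _ => 0) (mix Λ σ σ')
        * (if τ = mix Λ σ' σ then 1 else 0) * (if τ' = mix Λ σ σ' then 1 else 0))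
    / (∑ A : Finset (Fin n),
        isingGibbs J (fun _ => 0) (mix A σ' σ) * isingGibbs J (fun _ => 0) (mix A σ σ'))

lemma mix_mix {n : ℕ} (Λ : Finset (Fin n)) (a b : Fin n → Bool) :
    mix Λ (mix Λ a b) (mix Λ b a) = a := by
  funext x; simp only [mix]; split_ifs <;> rfl

lemma mix_symmDiff {n : ℕ} (A Λ : Finset (Fin n)) (a b : Fin n → Bool) :
    mix A (mix Λ a b) (mix Λ b a) = mix (symmDiff A Λ) b a := by
  funext x
  simp only [mix, Finset.mem_symmDiff]
  by_cases hA : x ∈ A <;> by_cases hL : x ∈ Λ <;> simp [hA, hL]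

lemma isingWeight_pos {n : ℕ} (J : Fin n → Fin n → ℝ) (h : Fin n → ℝ)
    (σ : Fin n → Bool) : 0 < isingWeight J h σ := Real.exp_pos _

lemma sumWeight_pos {n : ℕ} (J : Fin n → Fin n → ℝ) (h : Fin n → ℝ) :
    0 < ∑ τ : Fin n → Bool, isingWeight J h τ :=
  Finset.sum_pos (fun τ _ => isingWeight_pos J h τ) Finset.univ_nonempty

lemma isingGibbs_pos {n : ℕ} (J : Fin n → Fin n → ℝ) (h : Fin n → ℝ)
    (σ : Fin n → Bool) : 0 < isingGibbs J h σ :=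
  div_pos (isingWeight_pos J h σ) (sumWeight_pos J h)

lemma weight_swap {n : ℕ} (J : Fin n → Fin n → ℝ) (h : Fin n → ℝ)
    (σ σ' τ τ' : Fin n → Bool)
    (hs : ∀ x, spin (τ x) + spin (τ' x) = spin (σ x) + spin (σ' x)) :
    isingWeight J h σ * isingWeight J h σ' *
        (isingWeight J (fun _ => (0:ℝ)) τ * isingWeight J (fun _ => (0:ℝ)) τ')
      = isingWeight J h τ * isingWeight J h τ' *
        (isingWeight J (fun _ => (0:ℝ)) σ * isingWeight J (fun _ => (0:ℝ)) σ') := by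
  have key : ∑ x, h x * spin (σ x) + ∑ x, h x * spin (σ' x)
      = ∑ x, h x * spin (τ x) + ∑ x, h x * spin (τ' x) := by
    rw [← Finset.sum_add_distrib, ← Finset.sum_add_distrib]
    exact Finset.sum_congr rfl fun x _ => by rw [← mul_add, ← mul_add, hs x]
  simp only [isingWeight, ← Real.exp_add, zero_mul, Finset.sum_const_zero, add_zero]
  congr 1
  linarith [key]

/-- Numerator of the block kernel rewritten as indicator sum times fixed weights. -/
lemma blockNum_eq {n : ℕ} (J : Fin n → Fin n → ℝ) (a b c d : Fin n → Bool) :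
    (∑ Λ : Finset (Fin n),
      isingGibbs J (fun _ => 0) (mix Λ b a) * isingGibbs J (fun _ => 0) (mix Λ a b)
        * (if c = mix Λ b a then 1 else 0) * (if d = mix Λ a b then 1 else 0))
    = (∑ Λ : Finset (Fin n), if c = mix Λ b a ∧ d = mix Λ a b then (1:ℝ) else 0)
        * (isingGibbs J (fun _ => 0) c * isingGibbs J (fun _ => 0) d) := by
  rw [Finset.sum_mul]
  refine Finset.sum_congr rfl fun Λ _ => ?_
  by_cases h1 : c = mix Λ b a <;> by_cases h2 : d = mix Λ a b <;>
    simp [h1, h2] <;> ring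

/-- the block kernel Q_J satisfies detailed balance with respect
to every Ising Gibbs measure μ_{J,h}. -/
theorem block_kernel_detailed_balance {n : ℕ} (J : Fin n → Fin n → ℝ)
    (hJsym : ∀ x y, J x y = J y x) (h : Fin n → ℝ)
    (σ σ' τ τ' : Fin n → Bool) :
    isingGibbs J h σ * isingGibbs J h σ' * blockKernel J σ σ' τ τ'
      = isingGibbs J h τ * isingGibbs J h τ' * blockKernel J τ τ' σ σ' := by
  classical
  have hiff : ∀ Λ : Finset (Fin n),
      (τ = mix Λ σ' σ ∧ τ' = mix Λ σ σ') ↔ (σ = mix Λ τ' τ ∧ σ' = mix Λ τ τ') := by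
    intro Λ
    constructor
    · rintro ⟨h1, h2⟩
      rw [h1, h2]
      exact ⟨(mix_mix Λ σ σ').symm, (mix_mix Λ σ' σ).symm⟩
    · rintro ⟨h1, h2⟩
      rw [h1, h2]
      exact ⟨(mix_mix Λ τ τ').symm, (mix_mix Λ τ' τ).symm⟩
  simp only [blockKernel, blockNum_eq]
  have hSeq : (∑ Λ : Finset (Fin n), if σ = mix Λ τ' τ ∧ σ' = mix Λ τ τ' then (1:ℝ) else 0)
      = (∑ Λ : Finset (Fin n), if τ = mix Λ σ' σ ∧ τ' = mix Λ σ σ' then (1:ℝ) else 0) :=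
    Finset.sum_congr rfl fun Λ _ => if_congr (hiff Λ).symm rfl rfl
  rw [hSeq]
  by_cases hex : ∃ Λ : Finset (Fin n), τ = mix Λ σ' σ ∧ τ' = mix Λ σ σ'
  · obtain ⟨Λ₀, hτ, hτ'⟩ := hex
    -- denominators agree
    have hD : (∑ A : Finset (Fin n),
          isingGibbs J (fun _ => 0) (mix A τ' τ) * isingGibbs J (fun _ => 0) (mix A τ τ'))
        = ∑ A : Finset (Fin n),
          isingGibbs J (fun _ => 0) (mix A σ' σ) * isingGibbs J (fun _ => 0) (mix A σ σ') := by
      have step : ∀ A : Finset (Fin n),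
          isingGibbs J (fun _ => 0) (mix A τ' τ) * isingGibbs J (fun _ => 0) (mix A τ τ')
          = isingGibbs J (fun _ => 0) (mix (symmDiff A Λ₀) σ' σ)
              * isingGibbs J (fun _ => 0) (mix (symmDiff A Λ₀) σ σ') := by
        intro A
        rw [hτ, hτ', mix_symmDiff A Λ₀ σ σ', mix_symmDiff A Λ₀ σ' σ]
      have hbij : Function.Bijective (fun A : Finset (Fin n) => symmDiff A Λ₀) :=
        Function.Involutive.bijective (fun A => symmDiff_symmDiff_cancel_right Λ₀ A)
      calc (∑ A : Finset (Fin n),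
            isingGibbs J (fun _ => 0) (mix A τ' τ) * isingGibbs J (fun _ => 0) (mix A τ τ'))
          = ∑ A : Finset (Fin n),
            isingGibbs J (fun _ => 0) (mix (symmDiff A Λ₀) σ' σ)
              * isingGibbs J (fun _ => 0) (mix (symmDiff A Λ₀) σ σ') :=
            Finset.sum_congr rfl fun A _ => step A
        _ = _ := Fintype.sum_bijective _ hbij _ _ (fun A => rfl)
    rw [hD]
    -- key weight identity
    have hs : ∀ x, spin (τ x) + spin (τ' x) = spin (σ x) + spin (σ' x) := by
      intro x
      rw [hτ, hτ']
      simp only [mix]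
      split_ifs <;> ring
    have key : isingGibbs J h σ * isingGibbs J h σ' *
          (isingGibbs J (fun _ => 0) τ * isingGibbs J (fun _ => 0) τ')
        = isingGibbs J h τ * isingGibbs J h τ' *
          (isingGibbs J (fun _ => 0) σ * isingGibbs J (fun _ => 0) σ') := by
      simp only [isingGibbs]
      rw [div_mul_div_comm, div_mul_div_comm, div_mul_div_comm,
        div_mul_div_comm, div_mul_div_comm, div_mul_div_comm,
        weight_swap J h σ σ' τ τ' hs]
    set S := ∑ Λ : Finset (Fin n), if τ = mix Λ σ' σ ∧ τ' = mix Λ σ σ' then (1:ℝ) else 0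
    set D := ∑ A : Finset (Fin n),
        isingGibbs J (fun _ => 0) (mix A σ' σ) * isingGibbs J (fun _ => 0) (mix A σ σ')
    have e1 : isingGibbs J h σ * isingGibbs J h σ' *
        (S * (isingGibbs J (fun _ => 0) τ * isingGibbs J (fun _ => 0) τ') / D)
        = S / D * (isingGibbs J h σ * isingGibbs J h σ' *
            (isingGibbs J (fun _ => 0) τ * isingGibbs J (fun _ => 0) τ')) := by ring
    have e2 : isingGibbs J h τ * isingGibbs J h τ' *
        (S * (isingGibbs J (fun _ => 0) σ * isingGibbs J (fun _ => 0) σ') / D)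
        = S / D * (isingGibbs J h τ * isingGibbs J h τ' *
            (isingGibbs J (fun _ => 0) σ * isingGibbs J (fun _ => 0) σ')) := by ring
    rw [e1, e2, key]
  · push_neg at hex
    have hS0 : (∑ Λ : Finset (Fin n), if τ = mix Λ σ' σ ∧ τ' = mix Λ σ σ' then (1:ℝ) else 0)
        = 0 := by
      refine Finset.sum_eq_zero fun Λ _ => ?_
      rw [if_neg]
      rintro ⟨h1, h2⟩
      exact hex Λ h1 h2
    rw [hS0]
    simp
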